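/- Let n ≥ 1, 0 ≤ k < n, R₀ > 0 and d > 0. Let x ∈ ℝⁿ satisfy: x_i = 0 for all 1 ≤ i ≤ k (so ‖x‖ = ‖x''‖ where x'' denotes the vector of the last n−k coordinates), ‖x‖ = d, and ‖x‖ · cos(π/2 + d/(4R₀)) ≤ x_n (the cone condition with opening angle ρ_d = π/2 + d/(4R₀)). Then ‖x + R₀ e_n‖ > R₀, where e_n is the n-th standard basis vector. Consequently, the set 𝒲 = {x ∈ ℝⁿ : ‖x''‖ = d} ∩ {x : ‖x‖ cos(π/2 + d/(4R₀)) ≤ x_n} is disjoint from the half-ball {x ∈ ℝⁿ : x' = 0, ‖x'' + R₀ e_n‖ ≤ R₀}. -/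

import Mathlib

open Real

/-- The "tail part" `x''` of `x ∈ ℝⁿ`: the vector of the last `n − k` coordinates of `x`,
embedded back into `ℝⁿ` by padding the first `k` coordinates with zeros. -/
noncomputable def tailPart (n k : ℕ) (x : EuclideanSpace ℝ (Fin n)) :
    EuclideanSpace ℝ (Fin n) :=
  (EuclideanSpace.equiv (Fin n) ℝ).symm (fun j => if (j : ℕ) < k then 0 else x j)

lemma cone_key (n : ℕ) (hn : 1 ≤ n) (R₀ d : ℝ) (hR₀ : 0 < R₀) (hd : 0 < d)
    (x : EuclideanSpace ℝ (Fin n))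
    (hxnorm : ‖x‖ = d)
    (hcone : ‖x‖ * Real.cos (π / 2 + d / (4 * R₀)) ≤ x ⟨n - 1, by omega⟩) :
    ‖x + R₀ • EuclideanSpace.single (⟨n - 1, by omega⟩ : Fin n) (1 : ℝ)‖ > R₀ := by
  set i : Fin n := ⟨n - 1, by omega⟩
  set e : EuclideanSpace ℝ (Fin n) := EuclideanSpace.single i (1 : ℝ)
  have hip : inner ℝ x (R₀ • e) = R₀ * x i := by
    rw [real_inner_smul_right]
    have : (inner ℝ x e : ℝ) = x i := by
      simp [e, real_inner_comm x e, EuclideanSpace.inner_single_left, EuclideanSpace.inner_single_right]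
    rw [this]
  have hne : ‖R₀ • e‖ = R₀ := by
    rw [norm_smul]
    simp [e, EuclideanSpace.norm_single, abs_of_pos hR₀]
  have hsq : ‖x + R₀ • e‖ ^ 2 = d ^ 2 + 2 * (R₀ * x i) + R₀ ^ 2 := by
    rw [norm_add_sq_real, hip, hne, hxnorm]
  have hθ : 0 ≤ d / (4 * R₀) := by positivity
  have hsin : Real.sin (d / (4 * R₀)) ≤ d / (4 * R₀) := Real.sin_le hθ
  have hcos : Real.cos (π / 2 + d / (4 * R₀)) = -Real.sin (d / (4 * R₀)) := by
    rw [Real.cos_add]; simp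
  have hxi : d * (-Real.sin (d / (4 * R₀))) ≤ x i := by
    rw [← hcos]; rw [hxnorm] at hcone; exact hcone
  have hlt : R₀ ^ 2 < ‖x + R₀ • e‖ ^ 2 := by
    rw [hsq]
    have h1 : -(d * (d / (4 * R₀))) ≤ x i := by
      have := mul_le_mul_of_nonneg_left (neg_le_neg hsin) hd.le
      nlinarith
    have : d * (d / (4 * R₀)) * (2 * R₀) = d ^ 2 / 2 := by
      field_simp; ring
    nlinarith
  exact lt_of_pow_lt_pow_left₀ 2 (norm_nonneg _) hlt

theorem cone_slice_outside_sphere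
    (n k : ℕ) (hn : 1 ≤ n) (hkn : k < n) (R₀ d : ℝ) (hR₀ : 0 < R₀) (hd : 0 < d)
    (x : EuclideanSpace ℝ (Fin n))
    (hx' : ∀ j : Fin n, (j : ℕ) < k → x j = 0)
    (hxnorm : ‖x‖ = d)
    (hcone : ‖x‖ * Real.cos (π / 2 + d / (4 * R₀)) ≤ x ⟨n - 1, by omega⟩) :
    ‖x + R₀ • EuclideanSpace.single (⟨n - 1, by omega⟩ : Fin n) (1 : ℝ)‖ > R₀ ∧
      Disjoint
        ({y : EuclideanSpace ℝ (Fin n) | ‖tailPart n k y‖ = d} ∩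
          {y : EuclideanSpace ℝ (Fin n) |
            ‖y‖ * Real.cos (π / 2 + d / (4 * R₀)) ≤ y ⟨n - 1, by omega⟩})
        {y : EuclideanSpace ℝ (Fin n) | (∀ j : Fin n, (j : ℕ) < k → y j = 0) ∧
          ‖tailPart n k y + R₀ • EuclideanSpace.single (⟨n - 1, by omega⟩ : Fin n) (1 : ℝ)‖
            ≤ R₀} := by
  constructor
  · exact cone_key n hn R₀ d hR₀ hd x hxnorm hcone
  · rw [Set.disjoint_left]
    rintro y ⟨hy1, hy2⟩ ⟨hy3, hy4⟩
    have htail : tailPart n k y = y := by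
      ext j
      simp only [tailPart, EuclideanSpace.equiv]
      by_cases h : (j : ℕ) < k
      · simp [h, hy3 j h]
      · simp [h]
    simp only [Set.mem_setOf_eq] at hy1 hy2 hy4
    rw [htail] at hy1 hy4
    exact absurd hy4 (not_le.mpr (cone_key n hn R₀ d hR₀ hd y hy1
      hy2))
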